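/- The quotient group ℤⁿ / image(D² − 1) is isomorphic to ℤ × ℤ/2^{n−1}ℤ. (This computes K¹ of the quantum real projective space ℝP^{2n−1}_q, i.e. the quantum lens space with p = 2.) -/

import Mathlib

/-!
`ℤⁿ` is the abelian group of functions `Fin n → ℤ` (coordinates `1,…,n`
corresponding to indices `0,…,n-1`).  `shiftE n` is the shift operator `t`,
`(tη)(i) = η(i+1)` for `i < n` and `(tη)(n) = 0`, and
`DE n = 1 + t + t² + … + t^{n−1}`.
-/

noncomputable section

/-- The shift operator `t` on `ℤⁿ`. -/
def shiftE (n : ℕ) : Module.End ℤ (Fin n → ℤ) :=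
  (AddMonoidHom.mk' (fun (η : Fin n → ℤ) (i : Fin n) => if h : (i : ℕ) + 1 < n then η ⟨(i : ℕ) + 1, h⟩ else 0) (by
    intro a b
    funext i
    by_cases h : (i : ℕ) + 1 < n <;> simp [h])).toIntLinearMap

/-- The operator `D = 1 + t + t² + … + t^{n−1}` on `ℤⁿ`. -/
def DE (n : ℕ) : Module.End ℤ (Fin n → ℤ) := ∑ i ∈ Finset.range n, shiftE n ^ i

lemma shiftE_apply (n : ℕ) (η : Fin n → ℤ) (i : Fin n) :
    shiftE n η i = if h : (i : ℕ) + 1 < n then η ⟨(i : ℕ) + 1, h⟩ else 0 := rfl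

lemma shiftE_pow_apply (n k : ℕ) (η : Fin n → ℤ) (i : Fin n) :
    (shiftE n ^ k) η i = if h : (i : ℕ) + k < n then η ⟨(i : ℕ) + k, h⟩ else 0 := by
  induction k generalizing η with
  | zero => simp [i.isLt]
  | succ k ih =>
    rw [pow_succ, Module.End.mul_apply, ih]
    by_cases h : (i : ℕ) + k < n
    · rw [dif_pos h, shiftE_apply]
      by_cases h2 : (i : ℕ) + (k + 1) < n
      · rw [dif_pos h2, dif_pos (show ((⟨(i:ℕ)+k, h⟩ : Fin n) : ℕ) + 1 < n from by simp only; omega)]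
        rfl
      · rw [dif_neg h2, dif_neg (show ¬(((⟨(i:ℕ)+k, h⟩ : Fin n) : ℕ) + 1 < n) from by simp only; omega)]
    · rw [dif_neg h, dif_neg (show ¬((i : ℕ) + (k+1) < n) from by omega)]

lemma shiftE_pow_n (n : ℕ) : shiftE n ^ n = 0 := by
  apply LinearMap.ext; intro η; funext i
  rw [shiftE_pow_apply, dif_neg (by omega)]
  rfl

lemma DE_mul (n : ℕ) : (1 - shiftE n) * DE n = 1 := by
  have h := mul_geom_sum (shiftE n) n
  rw [shiftE_pow_n] at h
  have : (1 - shiftE n) * DE n = -((shiftE n - 1) * ∑ i ∈ Finset.range n, shiftE n ^ i) := by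
    rw [DE]; noncomm_ring
  rw [this, h]; noncomm_ring

lemma DE_mul' (n : ℕ) : DE n * (1 - shiftE n) = 1 := by
  have h := geom_sum_mul (shiftE n) n
  rw [shiftE_pow_n] at h
  have : DE n * (1 - shiftE n) = -((∑ i ∈ Finset.range n, shiftE n ^ i) * (shiftE n - 1)) := by
    rw [DE]; noncomm_ring
  rw [this, h]; noncomm_ring

/-- The operator `2t - t²` on `ℤⁿ`. -/
def gE (n : ℕ) : Module.End ℤ (Fin n → ℤ) := 2 * shiftE n - shiftE n ^ 2

lemma key_factor (n : ℕ) :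
    DE n ^ 2 - 1 = gE n * DE n ^ 2 := by
  have h2 : (1 - shiftE n) ^ 2 * DE n ^ 2 = 1 := by
    rw [pow_two, pow_two, mul_assoc, ← mul_assoc (1 - shiftE n) (DE n), DE_mul, one_mul, DE_mul]
  have : gE n * DE n ^ 2
      = DE n ^ 2 - (1 - shiftE n) ^ 2 * DE n ^ 2 := by rw [gE]; noncomm_ring
  rw [this, h2]

lemma range_eq (n : ℕ) :
    LinearMap.range (DE n ^ 2 - 1) = LinearMap.range (gE n) := by
  rw [key_factor, Module.End.mul_eq_comp, LinearMap.range_comp_of_range_eq_top]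
  rw [LinearMap.range_eq_top]
  intro x
  exact ⟨(((1 - shiftE n) ^ 2 : Module.End ℤ (Fin n → ℤ))) x, by
    have h2 : DE n ^ 2 * (1 - shiftE n) ^ 2 = 1 := by
      rw [pow_two, pow_two, mul_assoc, ← mul_assoc (DE n) (1 - shiftE n), DE_mul', one_mul, DE_mul']
    have := congrArg (fun f => f x) h2
    simpa [Module.End.mul_apply] using this⟩

/-- Extension of `ξ : Fin n → ℤ` to `ℕ`, by zero. -/
def extF (n : ℕ) (ξ : Fin n → ℤ) : ℕ → ℤ := fun k => if h : k < n then ξ ⟨k, h⟩ else 0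

lemma extF_lt (n : ℕ) (ξ : Fin n → ℤ) (k : ℕ) (h : k < n) : extF n ξ k = ξ ⟨k, h⟩ := dif_pos h
lemma extF_ge (n : ℕ) (ξ : Fin n → ℤ) (k : ℕ) (h : ¬ k < n) : extF n ξ k = 0 := dif_neg h

lemma gE_apply (n : ℕ) (ξ : Fin n → ℤ) (i : Fin n) :
    gE n ξ i = 2 * extF n ξ ((i:ℕ)+1) - extF n ξ ((i:ℕ)+2) := by
  have h2 : (shiftE n ^ 2) ξ i = extF n ξ ((i:ℕ)+2) := by
    rw [shiftE_pow_apply]; rfl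
  have h1 : (2 * shiftE n) ξ i = 2 * extF n ξ ((i:ℕ)+1) := by
    rw [two_mul, LinearMap.add_apply, Pi.add_apply, shiftE_apply]
    unfold extF; ring
  rw [gE, LinearMap.sub_apply, Pi.sub_apply, h1, h2]

/-- The weighted sum `∑_{i<n-1} 2^{n-2-i} η(i)`. -/
def sumF (n : ℕ) (η : Fin n → ℤ) : ℤ :=
  ∑ i ∈ Finset.range (n-1), 2^(n-2-i) * extF n η i

lemma extF_add (n : ℕ) (a b : Fin n → ℤ) (k : ℕ) :
    extF n (a + b) k = extF n a k + extF n b k := by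
  unfold extF; by_cases h : k < n <;> simp [h]

lemma sumF_add (n : ℕ) (a b : Fin n → ℤ) : sumF n (a + b) = sumF n a + sumF n b := by
  unfold sumF
  rw [← Finset.sum_add_distrib]
  exact Finset.sum_congr rfl fun i _ => by rw [extF_add, mul_add]

/-- The homomorphism inducing the isomorphism. -/
def phiF (n : ℕ) (h : n - 1 < n) : (Fin n → ℤ) →ₗ[ℤ] ℤ × ZMod (2^(n-1)) :=
  (AddMonoidHom.mk' (fun η => (η ⟨n-1, h⟩, ((sumF n η : ℤ) : ZMod (2^(n-1)))))
    (fun a b => by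
      simp only [Pi.add_apply, sumF_add, Int.cast_add, Prod.mk_add_mk])).toIntLinearMap

lemma phiF_apply (n : ℕ) (h : n - 1 < n) (η : Fin n → ℤ) :
    phiF n h η = (η ⟨n-1, h⟩, ((sumF n η : ℤ) : ZMod (2^(n-1)))) := rfl

lemma sumF_g (n : ℕ) (hn : 2 ≤ n) (ξ : Fin n → ℤ) :
    sumF n (gE n ξ) = 2^(n-1) * extF n ξ 1 := by
  set f : ℕ → ℤ := fun i => 2^(n-1-i) * extF n ξ (i+1) with hf
  have step : ∀ i ∈ Finset.range (n-1), 2^(n-2-i) * extF n (gE n ξ) i = f i - f (i+1) := by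
    intro i hi
    rw [Finset.mem_range] at hi
    have hin : i < n := by omega
    rw [extF_lt n _ i hin, gE_apply]
    have e1 : n - 1 - i = (n - 2 - i) + 1 := by omega
    have e2 : n - 1 - (i+1) = n - 2 - i := by omega
    simp only [hf, e1, e2]
    ring
  rw [sumF, Finset.sum_congr rfl step, Finset.sum_range_sub' f (n-1)]
  have : f (n-1) = 0 := by
    have : (n-1) + 1 = n := by omega
    simp [hf, this, extF_ge n ξ n (lt_irrefl n)]
  rw [this, hf]
  simp

lemma phiF_g (n : ℕ) (hn : 2 ≤ n) (ξ : Fin n → ℤ) :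
    phiF n (by omega) (gE n ξ) = 0 := by
  rw [phiF_apply]
  have h1 : gE n ξ ⟨n-1, by omega⟩ = 0 := by
    rw [gE_apply]
    simp only
    rw [extF_ge n ξ _ (by omega), extF_ge n ξ _ (by omega)]
    ring
  have h2 : ((sumF n (gE n ξ) : ℤ) : ZMod (2^(n-1))) = 0 := by
    rw [ZMod.intCast_zmod_eq_zero_iff_dvd, sumF_g n hn]
    exact Dvd.dvd.mul_right (by push_cast; rfl) _
  rw [h1, h2]
  rfl

/-- Partial weighted sums. -/
def UF (n : ℕ) (η : Fin n → ℤ) (j : ℕ) : ℤ :=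
  ∑ i ∈ Finset.Ico (j-1) (n-1), 2^(n-2-i) * extF n η i

lemma UF_one (n : ℕ) (η : Fin n → ℤ) : UF n η 1 = sumF n η := by
  rw [UF, sumF, Finset.range_eq_Ico]

lemma ker_sub (n : ℕ) (hn : 2 ≤ n) (η : Fin n → ℤ)
    (h1 : η ⟨n-1, by omega⟩ = 0) (h2 : (2^(n-1) : ℤ) ∣ sumF n η) :
    ∃ ξ : Fin n → ℤ, gE n ξ = η := by
  have hUdvd : ∀ j, 1 ≤ j → j ≤ n-1 → (2^(n-j) : ℤ) ∣ UF n η j := by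
    intro j hj1 hj2
    have hsplit : (∑ i ∈ Finset.Ico 0 (j-1), 2^(n-2-i) * extF n η i) + UF n η j
        = UF n η 1 := by
      rw [UF, UF]
      rw [show (1:ℕ) - 1 = 0 from rfl]
      exact Finset.sum_Ico_consecutive _ (by omega) (by omega)
    have heq : UF n η j = UF n η 1 - ∑ i ∈ Finset.Ico 0 (j-1), 2^(n-2-i) * extF n η i := by
      omega
    rw [heq]
    apply dvd_sub
    · rw [UF_one]
      exact dvd_trans (pow_dvd_pow 2 (by omega)) h2
    · apply Finset.dvd_sum
      intro i hi
      rw [Finset.mem_Ico] at hi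
      exact Dvd.dvd.mul_right (pow_dvd_pow 2 (by omega)) _
  have hUrec : ∀ j, j + 1 < n → UF n η (j+1) = 2^(n-2-j) * extF n η j + UF n η (j+2) := by
    intro j hj
    rw [UF, UF, show j + 1 - 1 = j from rfl, show j + 2 - 1 = j + 1 from rfl]
    rw [Finset.sum_eq_sum_Ico_succ_bot (by omega : j < n - 1)]
  set ξ : Fin n → ℤ := fun j => if hj : 1 ≤ (j:ℕ) then UF n η (j:ℕ) / 2 ^ (n-(j:ℕ)) else 0 with hξ
  refine ⟨ξ, ?_⟩
  have hξval : ∀ k, 1 ≤ k → k ≤ n - 1 → ∀ a : ℤ, UF n η k = 2^(n-k) * a → extF n ξ k = a := by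
    intro k hk1 hk2 a ha
    rw [extF_lt n ξ k (by omega), hξ]
    simp only [dif_pos hk1]
    rw [ha, Int.mul_ediv_cancel_left _ (by positivity)]
  funext i
  rcases lt_trichotomy ((i:ℕ)+2) n with hlt | heq | hgt
  · obtain ⟨a, ha⟩ := hUdvd ((i:ℕ)+1) (by omega) (by omega)
    obtain ⟨c, hc⟩ := hUdvd ((i:ℕ)+2) (by omega) (by omega)
    rw [gE_apply, hξval _ (by omega) (by omega) a ha, hξval _ (by omega) (by omega) c hc]
    have hrec := hUrec (i:ℕ) (by omega)
    rw [ha, hc] at hrec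
    rw [show n - ((i:ℕ)+1) = (n - 2 - (i:ℕ)) + 1 by omega,
        show n - ((i:ℕ)+2) = n - 2 - (i:ℕ) by omega, pow_succ] at hrec
    have h2pos : (0:ℤ) < 2^(n-2-(i:ℕ)) := by positivity
    have h' : (2:ℤ)^(n-2-(i:ℕ)) * (2*a) = 2^(n-2-(i:ℕ)) * (extF n η (i:ℕ) + c) := by
      ring_nf
      ring_nf at hrec
      linarith
    have hkey := mul_left_cancel₀ (ne_of_gt h2pos) h'
    rw [extF_lt n η (i:ℕ) (by omega), Fin.eta] at hkey
    linarith
  · obtain ⟨a, ha⟩ := hUdvd ((i:ℕ)+1) (by omega) (by omega)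
    rw [gE_apply, hξval _ (by omega) (by omega) a ha, extF_ge n ξ _ (by omega)]
    have hUval : UF n η ((i:ℕ)+1) = extF n η (i:ℕ) := by
      rw [UF, show (i:ℕ) + 1 - 1 = (i:ℕ) from rfl]
      rw [Finset.sum_eq_sum_Ico_succ_bot (by omega : (i:ℕ) < n - 1)]
      rw [show n - 1 = (i:ℕ) + 1 by omega]
      rw [Finset.Ico_self, Finset.sum_empty, show n - 2 - (i:ℕ) = 0 by omega]
      ring
    rw [show n - ((i:ℕ)+1) = 1 by omega, pow_one, hUval,
        extF_lt n η (i:ℕ) (by omega), Fin.eta] at ha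
    rw [ha]; ring
  · rw [gE_apply, extF_ge n ξ _ (by omega), extF_ge n ξ _ (by omega)]
    have hi : i = ⟨n-1, by omega⟩ := by
      apply Fin.ext
      simp only
      omega
    rw [hi, h1]
    ring

lemma phiF_surj (n : ℕ) (hn : 2 ≤ n) : Function.Surjective (phiF n (by omega)) := by
  rintro ⟨a, b⟩
  obtain ⟨b', hb'⟩ := ZMod.intCast_surjective b
  refine ⟨fun j => if (j:ℕ) = n-1 then a else if (j:ℕ) = n-2 then b' else 0, ?_⟩
  rw [phiF_apply]
  have hsum : sumF n (fun j : Fin n => if (j:ℕ) = n-1 then a else if (j:ℕ) = n-2 then b' else 0)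
      = b' := by
    rw [sumF]
    rw [Finset.sum_eq_single_of_mem (n-2) (Finset.mem_range.mpr (by omega))]
    · rw [extF, show n - 2 - (n-2) = 0 by omega]
      simp only [dif_pos (show n - 2 < n by omega)]
      simp only [if_neg (show ¬ (n-2 = n-1) by omega), if_pos rfl]
      simp
    · intro i hi hne
      rw [Finset.mem_range] at hi
      rw [extF]
      simp only [dif_pos (show i < n by omega)]
      rw [if_neg (by omega), if_neg (by omega)]
      ring
  rw [hsum, hb']
  simp

/-- The quotient group `ℤⁿ / image(D² − 1)` is isomorphic to `ℤ × ℤ/2^{n−1}ℤ`.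
(This computes `K¹` of the quantum real projective space `ℝP^{2n−1}_q`.) -/
theorem quantum_RP_K1 (n : ℕ) (hn : 2 ≤ n) :
    Nonempty (((Fin n → ℤ) ⧸ LinearMap.range (DE n ^ 2 - 1)) ≃+ ℤ × ZMod (2 ^ (n - 1))) := by
  have h : n - 1 < n := by omega
  have hker : LinearMap.range (DE n ^ 2 - 1) = LinearMap.ker (phiF n h) := by
    rw [range_eq]
    ext η
    simp only [LinearMap.mem_ker, LinearMap.mem_range]
    constructor
    · rintro ⟨ξ, rfl⟩
      exact phiF_g n hn ξ
    · intro hη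
      rw [phiF_apply] at hη
      have h1 : η ⟨n-1, h⟩ = 0 := congrArg Prod.fst hη
      have h2' : ((sumF n η : ℤ) : ZMod (2^(n-1))) = 0 := congrArg Prod.snd hη
      rw [ZMod.intCast_zmod_eq_zero_iff_dvd] at h2'
      exact ker_sub n hn η h1 (by exact_mod_cast h2')
  exact ⟨((Submodule.quotEquivOfEq _ _ hker).trans
    ((phiF n h).quotKerEquivOfSurjective (phiF_surj n hn))).toAddEquiv⟩
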